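/- Let a = (1 + √10)/6, T₃ = {x ∈ ℝ³ : x₁ > 1/2, ‖x − a·e₁‖ < 1/2, ‖x‖ < 1}, and S₃ = T₃ ∪ (−T₃). Then vol(S₃)/vol(B₃) > 1/8. -/

import Mathlib

open MeasureTheory Metric

noncomputable def a : ℝ := (1 + Real.sqrt 10) / 6

noncomputable def T3 : Set (EuclideanSpace ℝ (Fin 3)) :=
  {x | x 0 > 1/2 ∧ ‖x - a • EuclideanSpace.single (0 : Fin 3) (1 : ℝ)‖ < 1/2 ∧ ‖x‖ < 1}


noncomputable def cylSet (l u s : ℝ) : Set (EuclideanSpace ℝ (Fin 3)) :=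
  {x | x 0 ∈ Set.Ioo l u ∧ (x 1)^2 + (x 2)^2 < s}

theorem volume_cylSet (l u s : ℝ) (hs : 0 < s) :
    volume (cylSet l u s) = ENNReal.ofReal (u - l) * ENNReal.ofReal (Real.pi * s) := by
  have hφ := EuclideanSpace.volume_preserving_symm_measurableEquiv_toLp (Fin 3)
  set φ := (MeasurableEquiv.toLp 2 (Fin 3 → ℝ)).symm with hφdef
  set S : Set (Fin 3 → ℝ) := {y | y 0 ∈ Set.Ioo l u ∧ (y 1)^2 + (y 2)^2 < s} with hS
  have hSm : MeasurableSet S := by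
    apply MeasurableSet.inter
    · exact (measurable_pi_apply 0) measurableSet_Ioo
    · exact measurableSet_lt
        (((measurable_pi_apply 1).pow_const 2).add ((measurable_pi_apply 2).pow_const 2))
        measurable_const
  have h1 : cylSet l u s = φ ⁻¹' S := rfl
  rw [h1, hφ.measure_preimage hSm.nullMeasurableSet]
  set D : Set (Fin 2 → ℝ) := {z | (z 0)^2 + (z 1)^2 < s} with hD
  have hDm : MeasurableSet D := measurableSet_lt
    (((measurable_pi_apply 0).pow_const 2).add ((measurable_pi_apply 1).pow_const 2))
    measurable_const
  have hψ := volume_preserving_piFinSuccAbove (fun _ : Fin 3 => ℝ) 0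
  have h2 : S = (MeasurableEquiv.piFinSuccAbove (fun _ : Fin 3 => ℝ) 0) ⁻¹' ((Set.Ioo l u) ×ˢ D) := by
    ext y
    simp [MeasurableEquiv.piFinSuccAbove, hD, Fin.succAbove]
    rfl
  have hDvol : volume D = ENNReal.ofReal (Real.pi * s) := by
    have hφ2 := EuclideanSpace.volume_preserving_symm_measurableEquiv_toLp (Fin 2)
    have h3 : volume D = volume (((MeasurableEquiv.toLp 2 (Fin 2 → ℝ)).symm) ⁻¹' D) :=
      (hφ2.measure_preimage hDm.nullMeasurableSet).symm
    have h4 : ((MeasurableEquiv.toLp 2 (Fin 2 → ℝ)).symm) ⁻¹' D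
        = ball (0 : EuclideanSpace ℝ (Fin 2)) (Real.sqrt s) := by
      ext x
      simp only [Set.mem_preimage, mem_ball, dist_zero_right, hD, Set.mem_setOf_eq]
      rw [EuclideanSpace.norm_eq, Fin.sum_univ_two]
      rw [Real.sqrt_lt_sqrt_iff (by positivity)]
      simp [sq_abs]
    rw [h3, h4, EuclideanSpace.volume_ball]
    have hG : Real.Gamma ((Fintype.card (Fin 2) : ℝ) / 2 + 1) = 1 := by
      rw [Fintype.card_fin]
      norm_num [Real.Gamma_two]
    rw [hG, ← ENNReal.ofReal_pow (Real.sqrt_nonneg s), Fintype.card_fin, Real.sq_sqrt hs.le,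
      ← ENNReal.ofReal_mul hs.le]
    congr 1
    rw [Real.sq_sqrt Real.pi_pos.le]
    ring
  rw [h2, hψ.measure_preimage ((measurableSet_Ioo.prod hDm)).nullMeasurableSet,
    Measure.volume_eq_prod, Measure.prod_prod, Real.volume_Ioo, hDvol]

lemma measurableSet_cylSet (l u s : ℝ) : MeasurableSet (cylSet l u s) := by
  have hSm : MeasurableSet {y : Fin 3 → ℝ | y 0 ∈ Set.Ioo l u ∧ (y 1)^2 + (y 2)^2 < s} := by
    apply MeasurableSet.inter
    · exact (measurable_pi_apply 0) measurableSet_Ioo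
    · exact measurableSet_lt
        (((measurable_pi_apply 1).pow_const 2).add ((measurable_pi_apply 2).pow_const 2))
        measurable_const
  exact ((MeasurableEquiv.toLp 2 (Fin 3 → ℝ)).symm).measurable hSm

lemma cyl_disj {l u s l' u' s' : ℝ} (h : u ≤ l') :
    Disjoint (cylSet l u s) (cylSet l' u' s') := by
  rw [Set.disjoint_left]
  rintro x ⟨⟨_, h2⟩, _⟩ ⟨⟨h3, _⟩, _⟩
  linarith

lemma norm_lt_of_sq (x : EuclideanSpace ℝ (Fin 3)) {r : ℝ} (hr : 0 < r)
    (h : (x 0)^2 + (x 1)^2 + (x 2)^2 < r^2) : ‖x‖ < r := by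
  rw [EuclideanSpace.norm_eq, Fin.sum_univ_three, Real.sqrt_lt' hr]
  simpa [sq_abs] using h

lemma mem_T3_of (x : EuclideanSpace ℝ (Fin 3)) (h0 : 1/2 < x 0)
    (hb : (x 0 - a)^2 + (x 1)^2 + (x 2)^2 < (1/2)^2)
    (hn : (x 0)^2 + (x 1)^2 + (x 2)^2 < 1) : x ∈ T3 := by
  refine ⟨h0, ?_, ?_⟩
  · apply norm_lt_of_sq _ (by norm_num)
    have e0 : (x - a • EuclideanSpace.single (0 : Fin 3) (1 : ℝ)) 0 = x 0 - a := by
      simp [EuclideanSpace.single_apply]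
    have e1 : (x - a • EuclideanSpace.single (0 : Fin 3) (1 : ℝ)) 1 = x 1 := by
      simp [EuclideanSpace.single_apply]
    have e2 : (x - a • EuclideanSpace.single (0 : Fin 3) (1 : ℝ)) 2 = x 2 := by
      simp [EuclideanSpace.single_apply]
    rw [e0, e1, e2]
    exact hb
  · apply norm_lt_of_sq _ one_pos
    simpa using hn

lemma sqrt10_lb : (3.1622 : ℝ) < Real.sqrt 10 :=
  (Real.lt_sqrt (by norm_num)).mpr (by norm_num)

lemma sqrt10_ub : Real.sqrt 10 < 3.1623 :=
  (Real.sqrt_lt' (by norm_num)).mpr (by norm_num)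

lemma C1_sub : cylSet (1/2) (22/25) (531/2500) ⊆ T3 := by
  rintro x ⟨⟨h1, h2⟩, hq⟩
  have hl := sqrt10_lb; have hu := sqrt10_ub
  refine mem_T3_of x h1 ?_ ?_
  · have ha : a = (1 + Real.sqrt 10)/6 := rfl
    nlinarith [mul_nonneg (le_of_lt (show (0:ℝ) < x 0 - 1/2 by linarith))
      (show (0:ℝ) ≤ 2*a - 1/2 - x 0 by rw [ha]; nlinarith), sq_nonneg (x 1), sq_nonneg (x 2)]
  · nlinarith [sq_nonneg (x 1), sq_nonneg (x 2)]

lemma C2_sub : cylSet (22/25) (23/25) (96/625) ⊆ T3 := by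
  rintro x ⟨⟨h1, h2⟩, hq⟩
  have hl := sqrt10_lb; have hu := sqrt10_ub
  have ha : a = (1 + Real.sqrt 10)/6 := rfl
  refine mem_T3_of x (by linarith) ?_ ?_
  · nlinarith [mul_nonneg (le_of_lt (show (0:ℝ) < 23/25 - x 0 by linarith))
      (show (0:ℝ) ≤ x 0 + 23/25 - 2*a by rw [ha]; nlinarith), sq_nonneg (x 1), sq_nonneg (x 2)]
  · nlinarith [sq_nonneg (x 1), sq_nonneg (x 2)]

lemma neg_mem_cyl {l u s : ℝ} {x : EuclideanSpace ℝ (Fin 3)}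
    (hx : x ∈ cylSet l u s) : -x ∈ cylSet (-u) (-l) s := by
  obtain ⟨⟨h1, h2⟩, hq⟩ := hx
  have e : ∀ i, (-x : EuclideanSpace ℝ (Fin 3)) i = -(x i) := fun i => rfl
  refine ⟨⟨?_, ?_⟩, ?_⟩ <;> simp only [e] <;> [linarith; linarith; nlinarith]

lemma C3_sub : cylSet (-(22/25)) (-(1/2)) (531/2500) ⊆ -T3 := by
  intro x hx
  rw [Set.mem_neg]
  have := neg_mem_cyl hx
  simp only [neg_neg] at this
  exact C1_sub this

lemma C4_sub : cylSet (-(23/25)) (-(22/25)) (96/625) ⊆ -T3 := by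
  intro x hx
  rw [Set.mem_neg]
  have := neg_mem_cyl hx
  simp only [neg_neg] at this
  exact C2_sub this


lemma ball_volume_3 : volume (ball (0 : EuclideanSpace ℝ (Fin 3)) 1)
    = ENNReal.ofReal (4 * Real.pi / 3) := by
  rw [EuclideanSpace.volume_ball, Fintype.card_fin]
  have hG : Real.Gamma ((3:ℕ) / 2 + 1) = 3/4 * Real.sqrt Real.pi := by
    push_cast
    rw [show (3:ℝ)/2 + 1 = (3/2) + 1 by norm_num, Real.Gamma_add_one (by norm_num),
      show (3:ℝ)/2 = 1/2 + 1 by norm_num, Real.Gamma_add_one (by norm_num),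
      Real.Gamma_one_half_eq]
    ring
  rw [hG]
  have hs : Real.sqrt Real.pi > 0 := Real.sqrt_pos.mpr Real.pi_pos
  have hsq : Real.sqrt Real.pi * Real.sqrt Real.pi = Real.pi := Real.mul_self_sqrt Real.pi_pos.le
  simp only [ENNReal.ofReal_one, one_pow, one_mul]
  congr 1
  field_simp
  nlinarith [hsq, hs]

theorem stmt_9 :
    (volume (T3 ∪ -T3)).toReal >
      (1/8) * (volume (ball (0 : EuclideanSpace ℝ (Fin 3)) 1)).toReal := by
  set C1 := cylSet (1/2) (22/25) (531/2500) with hC1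
  set C2 := cylSet (22/25) (23/25) (96/625) with hC2
  set C3 := cylSet (-(23/25)) (-(22/25)) (96/625) with hC3
  set C4 := cylSet (-(22/25)) (-(1/2)) (531/2500) with hC4
  have hm1 := measurableSet_cylSet (1/2) (22/25) (531/2500)
  have hm2 := measurableSet_cylSet (22/25) (23/25) (96/625)
  have hm3 := measurableSet_cylSet (-(23/25)) (-(22/25)) (96/625)
  have hm4 := measurableSet_cylSet (-(22/25)) (-(1/2)) (531/2500)
  have hd12 : Disjoint C1 C2 := cyl_disj (by norm_num)
  have hd34 : Disjoint C3 C4 := cyl_disj (by norm_num)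
  have hd : Disjoint (C1 ∪ C2) (C3 ∪ C4) := by
    apply Disjoint.union_left <;> apply Disjoint.union_right
    · exact (cyl_disj (by norm_num)).symm
    · exact (cyl_disj (by norm_num)).symm
    · exact (cyl_disj (by norm_num)).symm
    · exact (cyl_disj (by norm_num)).symm
  have hsub : (C1 ∪ C2) ∪ (C3 ∪ C4) ⊆ T3 ∪ -T3 := by
    apply Set.union_subset
    · exact Set.union_subset (C1_sub.trans Set.subset_union_left)
        (C2_sub.trans Set.subset_union_left)
    · exact Set.union_subset (C4_sub.trans Set.subset_union_right)
        (C3_sub.trans Set.subset_union_right)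
  have hv : volume ((C1 ∪ C2) ∪ (C3 ∪ C4))
      = volume C1 + volume C2 + (volume C3 + volume C4) := by
    rw [measure_union hd (hm3.union hm4), measure_union hd12 hm2, measure_union hd34 hm4]
  have hW : volume C1 + volume C2 + (volume C3 + volume C4)
      = ENNReal.ofReal (2 * ((19/50) * (Real.pi * (531/2500)) + (1/25) * (Real.pi * (96/625)))) := by
    rw [hC1, hC2, hC3, hC4, volume_cylSet _ _ _ (by norm_num), volume_cylSet _ _ _ (by norm_num),
      volume_cylSet _ _ _ (by norm_num), volume_cylSet _ _ _ (by norm_num)]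
    rw [← ENNReal.ofReal_mul (by norm_num), ← ENNReal.ofReal_mul (by norm_num),
      ← ENNReal.ofReal_mul (by norm_num), ← ENNReal.ofReal_mul (by norm_num),
      ← ENNReal.ofReal_add (by positivity) (by positivity),
      ← ENNReal.ofReal_add (by positivity) (by positivity),
      ← ENNReal.ofReal_add (by positivity) (by positivity)]
    congr 1
    ring
  have key : ENNReal.ofReal (2 * ((19/50) * (Real.pi * (531/2500)) + (1/25) * (Real.pi * (96/625))))
      ≤ volume (T3 ∪ -T3) := by
    rw [← hW, ← hv]
    exact measure_mono hsub
  have hbsub : T3 ∪ -T3 ⊆ ball (0 : EuclideanSpace ℝ (Fin 3)) 1 := by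
    rintro x (hx | hx)
    · exact mem_ball_zero_iff.mpr hx.2.2
    · rw [Set.mem_neg] at hx
      exact mem_ball_zero_iff.mpr (by simpa using hx.2.2)
  have hfin : volume (T3 ∪ -T3) ≠ ⊤ :=
    ((measure_mono hbsub).trans_lt measure_ball_lt_top).ne
  have h1 : 2 * ((19/50) * (Real.pi * (531/2500)) + (1/25) * (Real.pi * (96/625)))
      ≤ (volume (T3 ∪ -T3)).toReal := by
    have h := ENNReal.toReal_mono hfin key
    rwa [ENNReal.toReal_ofReal (by positivity)] at h
  rw [ball_volume_3, ENNReal.toReal_ofReal (by positivity)]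
  nlinarith [Real.pi_pos, h1]
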